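/- Dichotomy from the separation property: Let H be a d×d real symmetric positive definite matrix, u ∈ ℝ^d nonzero, g := Hu, and let (w_k) be any sequence in ℝ^d with ‖w_k‖ ≥ 1 for all k. Define y_k := w_kᵀg and q_k := uᵀHu − y_k²/(w_kᵀHw_k). If ‖w_{k+1} − w_k‖ → 0 and y_k²·q_k → 0 as k → ∞, then either y_k² → 0 or q_k → 0. -/

import Mathlib

open Matrix Filter Topology

noncomputable section

lemma dot_self_nonneg' {d : ℕ} (x : Fin d → ℝ) : 0 ≤ x ⬝ᵥ x :=
  Finset.sum_nonneg fun i _ => mul_self_nonneg _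

lemma dot_cs {d : ℕ} (a b : Fin d → ℝ) : (a ⬝ᵥ b)^2 ≤ (a ⬝ᵥ a) * (b ⬝ᵥ b) := by
  simpa [dotProduct, sq] using Finset.sum_mul_sq_le_sq_mul_sq Finset.univ a b

lemma quad_cont {d : ℕ} (H : Matrix (Fin d) (Fin d) ℝ) :
    Continuous fun x : Fin d → ℝ => x ⬝ᵥ H.mulVec x := by
  simp only [dotProduct, Matrix.mulVec]
  fun_prop

lemma dot_self_pos {d : ℕ} {x : Fin d → ℝ} (hx : x ≠ 0) : 0 < x ⬝ᵥ x := by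
  rcases Function.ne_iff.1 hx with ⟨i, hi⟩
  have h1 : x i * x i ≤ x ⬝ᵥ x :=
    Finset.single_le_sum (f := fun j => x j * x j) (fun j _ => mul_self_nonneg _)
      (Finset.mem_univ i)
  have : 0 < x i * x i := mul_self_pos.2 hi
  linarith

lemma quad_smul {d : ℕ} (H : Matrix (Fin d) (Fin d) ℝ) (a : ℝ) (x : Fin d → ℝ) :
    (a • x) ⬝ᵥ H.mulVec (a • x) = a^2 * (x ⬝ᵥ H.mulVec x) := by
  rw [Matrix.mulVec_smul, smul_dotProduct, dotProduct_smul, smul_eq_mul,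
    smul_eq_mul]; ring

lemma posdef_lam {d : ℕ} (hd : 0 < d) (H : Matrix (Fin d) (Fin d) ℝ) (hH : H.PosDef) :
    ∃ lam > 0, ∀ x : Fin d → ℝ, lam * (x ⬝ᵥ x) ≤ x ⬝ᵥ H.mulVec x := by
  set S : Set (Fin d → ℝ) := {x | x ⬝ᵥ x = 1} with hS
  have hSne : S.Nonempty := by
    refine ⟨Pi.single ⟨0, hd⟩ 1, ?_⟩
    simp [hS, dotProduct, Pi.single_apply]
  have hclosed : IsClosed S := isClosed_eq (by simp only [dotProduct]; fun_prop) continuous_const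
  have hbd : Bornology.IsBounded S := by
    apply Bornology.IsBounded.subset (Metric.isBounded_closedBall (x := (0 : Fin d → ℝ)) (r := 1))
    intro x hx
    simp only [Metric.mem_closedBall, dist_zero_right]
    rw [pi_norm_le_iff_of_nonneg zero_le_one]
    intro i
    have h1 : x i * x i ≤ x ⬝ᵥ x :=
      Finset.single_le_sum (f := fun j => x j * x j) (fun j _ => mul_self_nonneg _)
        (Finset.mem_univ i)
    rw [hx] at h1
    rw [Real.norm_eq_abs, abs_le]
    constructor <;> nlinarith
  have hcomp : IsCompact S := Metric.isCompact_of_isClosed_isBounded hclosed hbd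
  obtain ⟨x₀, hx₀S, hmin⟩ := hcomp.exists_isMinOn hSne (quad_cont H).continuousOn
  have hx₀ne : x₀ ≠ 0 := by
    intro h; rw [h] at hx₀S; simp [hS, zero_dotProduct] at hx₀S
  refine ⟨x₀ ⬝ᵥ H.mulVec x₀, by simpa using hH.dotProduct_mulVec_pos hx₀ne, ?_⟩
  intro x
  by_cases hx : x = 0
  · simp [hx]
  · have hxx : 0 < x ⬝ᵥ x := dot_self_pos hx
    set c : ℝ := Real.sqrt (x ⬝ᵥ x) with hc
    have hcpos : 0 < c := Real.sqrt_pos.2 hxx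
    have hc2 : c^2 = x ⬝ᵥ x := Real.sq_sqrt hxx.le
    have hz : (c⁻¹ • x) ∈ S := by
      simp only [hS, Set.mem_setOf_eq]
      rw [show (c⁻¹ • x) ⬝ᵥ (c⁻¹ • x) = (c⁻¹)^2 * (x ⬝ᵥ x) by
        rw [smul_dotProduct, dotProduct_smul]; rw [smul_eq_mul, smul_eq_mul]; ring]
      field_simp [hc2]; linarith
    have h2 : x₀ ⬝ᵥ H.mulVec x₀ ≤ (c⁻¹ • x) ⬝ᵥ H.mulVec (c⁻¹ • x) := hmin hz
    rw [quad_smul] at h2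
    have hinv : (c⁻¹)^2 * (x ⬝ᵥ x) = 1 := by field_simp [hc2]; linarith
    have h3 := mul_le_mul_of_nonneg_right h2 hxx.le
    have h4 : c⁻¹^2 * (x ⬝ᵥ H.mulVec x) * (x ⬝ᵥ x) = x ⬝ᵥ H.mulVec x := by
      have : c⁻¹^2 * (x ⬝ᵥ H.mulVec x) * (x ⬝ᵥ x) = (x ⬝ᵥ H.mulVec x) * (c⁻¹^2 * (x ⬝ᵥ x)) := by
        ring
      rw [this, hinv, mul_one]
    linarith

lemma hsymm_dot {d : ℕ} {H : Matrix (Fin d) (Fin d) ℝ} (hH : H.IsHermitian)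
    (a b : Fin d → ℝ) : a ⬝ᵥ H.mulVec b = b ⬝ᵥ H.mulVec a := by
  rw [Matrix.dotProduct_mulVec, ← Matrix.mulVec_transpose]
  have hT : Hᵀ = H := by
    conv_rhs => rw [← hH]
    ext i j; simp [Matrix.conjTranspose_apply]
  rw [hT, dotProduct_comm]

lemma h_cs {d : ℕ} {H : Matrix (Fin d) (Fin d) ℝ} (hH : H.PosDef) (x z : Fin d → ℝ) :
    (x ⬝ᵥ H.mulVec z)^2 ≤ (x ⬝ᵥ H.mulVec x) * (z ⬝ᵥ H.mulVec z) := by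
  have key : ∀ t : ℝ,
      0 ≤ (z ⬝ᵥ H.mulVec z) * (t*t) + (2*(x ⬝ᵥ H.mulVec z)) * t + (x ⬝ᵥ H.mulVec x) := by
    intro t
    have h0 : 0 ≤ (x + t • z) ⬝ᵥ H.mulVec (x + t • z) := by
      have := hH.posSemidef.dotProduct_mulVec_nonneg (x + t • z); simpa using this
    have hexp : (x + t • z) ⬝ᵥ H.mulVec (x + t • z)
        = (z ⬝ᵥ H.mulVec z) * (t*t) + (2*(x ⬝ᵥ H.mulVec z)) * t + (x ⬝ᵥ H.mulVec x) := by
      simp only [Matrix.mulVec_add, Matrix.mulVec_smul, add_dotProduct,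
        dotProduct_add, smul_dotProduct, dotProduct_smul, smul_eq_mul,
        hsymm_dot hH.1 z x]
      ring
    linarith [hexp ▸ h0]
  have hd := discrim_le_zero key
  rw [discrim] at hd
  nlinarith [hd]


/-- Dichotomy from the separation property: for any sequence `(w_k)` with `‖w_k‖ ≥ 1`,
`y_k := w_kᵀg` and `q_k := uᵀHu − y_k²/(w_kᵀHw_k)`, if `‖w_{k+1} − w_k‖ → 0` and
`y_k²·q_k → 0`, then either `y_k² → 0` or `q_k → 0`. -/
theorem bngd_separation_dichotomy
    {d : ℕ} (hd : 0 < d)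
    (H : Matrix (Fin d) (Fin d) ℝ) (hH : H.PosDef)
    (u : Fin d → ℝ) (hu : u ≠ 0)
    (g : Fin d → ℝ) (hg : g = H.mulVec u)
    (w : ℕ → Fin d → ℝ) (hwnorm : ∀ k, 1 ≤ Real.sqrt (w k ⬝ᵥ w k))
    (y q : ℕ → ℝ)
    (hy : ∀ k, y k = w k ⬝ᵥ g)
    (hq : ∀ k, q k = u ⬝ᵥ H.mulVec u - (y k) ^ 2 / (w k ⬝ᵥ H.mulVec (w k)))
    (hstep : Tendsto
      (fun k => Real.sqrt ((w (k + 1) - w k) ⬝ᵥ (w (k + 1) - w k))) atTop (nhds 0))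
    (hyq : Tendsto (fun k => (y k) ^ 2 * q k) atTop (nhds 0)) :
    Tendsto (fun k => (y k) ^ 2) atTop (nhds 0) ∨ Tendsto q atTop (nhds 0) := by
  classical
  set A : ℝ := u ⬝ᵥ H.mulVec u with hAdef
  have hApos : 0 < A := by simpa [hAdef] using hH.dotProduct_mulVec_pos hu
  obtain ⟨lam, hlampos, hlamle⟩ := posdef_lam hd H hH
  have hwdot : ∀ k, 1 ≤ w k ⬝ᵥ w k := by
    intro k
    have h2 : (1:ℝ) ≤ Real.sqrt (w k ⬝ᵥ w k) := hwnorm k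
    nlinarith [Real.sq_sqrt (dot_self_nonneg' (w k))]
  have hwne : ∀ k, w k ≠ 0 := by
    intro k hk
    have h := hwdot k
    rw [hk, zero_dotProduct] at h
    linarith
  have hspos : ∀ k, 0 < w k ⬝ᵥ H.mulVec (w k) := fun k => by
    simpa using hH.dotProduct_mulVec_pos (hwne k)
  have hyg : ∀ k, y k = w k ⬝ᵥ H.mulVec u := fun k => by rw [hy, hg]
  have hq0 : ∀ k, 0 ≤ q k := by
    intro k
    have hcs := h_cs hH (w k) u
    rw [← hyg k] at hcs
    rw [hq, sub_nonneg, div_le_iff₀ (hspos k)]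
    calc y k ^2 ≤ (w k ⬝ᵥ H.mulVec (w k)) * A := hcs
      _ = A * (w k ⬝ᵥ H.mulVec (w k)) := mul_comm _ _
  have hy2 : ∀ k, y k ^2 = (A - q k) * (w k ⬝ᵥ H.mulVec (w k)) := by
    intro k
    have hdiv : y k^2 / (w k ⬝ᵥ H.mulVec (w k)) = A - q k := by rw [hq k]; ring
    rw [← hdiv, div_mul_cancel₀ _ (ne_of_gt (hspos k))]
  have hylb : ∀ k, q k ≤ A/2 → lam * A / 2 ≤ y k ^ 2 := by
    intro k hk
    have h1 := hy2 k
    have h2 := hlamle (w k)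
    have h3 := hwdot k
    have h4 := hspos k
    nlinarith [hlampos, hApos, mul_le_mul_of_nonneg_left h3 hlampos.le]
  set G : ℝ := Real.sqrt (g ⬝ᵥ g) with hG
  have hydiffle : ∀ k, |y (k+1) - y k|
      ≤ Real.sqrt ((w (k+1) - w k) ⬝ᵥ (w (k+1) - w k)) * G := by
    intro k
    have hsub : y (k+1) - y k = (w (k+1) - w k) ⬝ᵥ g := by
      rw [hy, hy, sub_dotProduct]
    rw [hsub]
    have hcs := dot_cs (w (k+1) - w k) g
    have h1 : |(w (k+1) - w k) ⬝ᵥ g| = Real.sqrt (((w (k+1) - w k) ⬝ᵥ g)^2) :=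
      (Real.sqrt_sq_eq_abs _).symm
    rw [h1, hG, ← Real.sqrt_mul (dot_self_nonneg' _)]
    exact Real.sqrt_le_sqrt hcs
  have hydiff : Tendsto (fun k => |y (k+1) - y k|) atTop (nhds 0) := by
    have hmul : Tendsto
        (fun k => Real.sqrt ((w (k+1) - w k) ⬝ᵥ (w (k+1) - w k)) * G) atTop (nhds 0) := by
      simpa using hstep.mul_const G
    exact squeeze_zero (fun k => abs_nonneg _) hydiffle hmul
  have key : ∀ ε : ℝ, 0 < ε → ε ≤ A/2 →
      (∀ᶠ k in atTop, q k < ε) ∨ (∀ᶠ k in atTop, ε ≤ q k) := by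
    intro ε hε hεA
    set δ : ℝ := Real.sqrt (lam * A / 2) with hδdef
    have hδpos : 0 < δ := Real.sqrt_pos.2 (by positivity)
    have h1 : ∀ᶠ k in atTop, |y (k+1) - y k| < δ/3 :=
      hydiff.eventually_lt_const (by positivity)
    have h2 : ∀ᶠ k in atTop, |y k ^2 * q k| < ε * (δ/3)^2 := by
      have := (NormedAddCommGroup.tendsto_nhds_zero.mp hyq) (ε * (δ/3)^2) (by positivity)
      simpa only [Real.norm_eq_abs] using this
    rw [eventually_atTop] at h1 h2
    obtain ⟨K₁, hK₁⟩ := h1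
    obtain ⟨K₂, hK₂⟩ := h2
    have factR : ∀ k, K₂ ≤ k → ε ≤ q k → |y k| < δ/3 := by
      intro k hk hq'
      have hb := hK₂ k hk
      have h3 : y k^2 * ε ≤ y k^2 * q k := mul_le_mul_of_nonneg_left hq' (sq_nonneg _)
      have h4 : y k^2 * q k ≤ |y k^2 * q k| := le_abs_self _
      have h5 : y k^2 < (δ/3)^2 := by nlinarith
      calc |y k| = Real.sqrt (y k^2) := (Real.sqrt_sq_eq_abs _).symm
        _ < Real.sqrt ((δ/3)^2) := Real.sqrt_lt_sqrt (sq_nonneg _) h5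
        _ = δ/3 := Real.sqrt_sq (by positivity)
    have factL : ∀ k, q k < ε → δ ≤ |y k| := by
      intro k hq'
      have h5 := hylb k (le_of_lt (lt_of_lt_of_le hq' hεA))
      calc δ = Real.sqrt (lam * A / 2) := hδdef
        _ ≤ Real.sqrt (y k^2) := Real.sqrt_le_sqrt h5
        _ = |y k| := Real.sqrt_sq_eq_abs _
    set K := max K₁ K₂ with hK
    by_cases hc : ε ≤ q K
    · right
      rw [eventually_atTop]
      refine ⟨K, fun k hk => ?_⟩
      induction k, hk using Nat.le_induction with
      | base => exact hc
      | succ n hn ih =>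
        by_contra hlt
        push_neg at hlt
        have hyn : |y n| < δ/3 := factR n (le_trans (le_max_right _ _) hn) ih
        have hyn1 : δ ≤ |y (n+1)| := factL (n+1) hlt
        have hstepn : |y (n+1) - y n| < δ/3 := hK₁ n (le_trans (le_max_left _ _) hn)
        have htri : |y (n+1)| - |y n| ≤ |y (n+1) - y n| := abs_sub_abs_le_abs_sub _ _
        linarith
    · left
      push_neg at hc
      rw [eventually_atTop]
      refine ⟨K, fun k hk => ?_⟩
      induction k, hk using Nat.le_induction with
      | base => exact hc
      | succ n hn ih =>
        by_contra hge
        push_neg at hge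
        have hyn1 : |y (n+1)| < δ/3 :=
          factR (n+1) (le_trans (le_max_right _ _) (le_trans hn (Nat.le_succ n))) hge
        have hyn : δ ≤ |y n| := factL n ih
        have hstepn : |y (n+1) - y n| < δ/3 := hK₁ n (le_trans (le_max_left _ _) hn)
        have htri : |y n| - |y (n+1)| ≤ |y n - y (n+1)| := abs_sub_abs_le_abs_sub _ _
        rw [abs_sub_comm] at htri
        linarith
  by_cases hex : ∃ ε : ℝ, 0 < ε ∧ ε ≤ A/2 ∧ ∀ᶠ k in atTop, ε ≤ q k
  · obtain ⟨ε, hε, hεA, hev⟩ := hex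
    left
    have hub : ∀ᶠ k in atTop, y k ^2 ≤ (y k^2 * q k)/ε := by
      filter_upwards [hev] with k hk
      rw [le_div_iff₀ hε]
      exact mul_le_mul_of_nonneg_left hk (sq_nonneg _)
    have hg0 : Tendsto (fun k => (y k^2 * q k)/ε) atTop (nhds 0) := by
      simpa using hyq.div_const ε
    exact squeeze_zero' (Eventually.of_forall fun k => sq_nonneg _) hub hg0
  · right
    push_neg at hex
    rw [NormedAddCommGroup.tendsto_nhds_zero]
    intro ε hε
    have hε' : 0 < min ε (A/2) := lt_min hε (by linarith)
    rcases key (min ε (A/2)) hε' (min_le_right _ _) with h | h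
    · filter_upwards [h] with k hk
      rw [Real.norm_eq_abs, abs_lt]
      refine ⟨by linarith [hq0 k], lt_of_lt_of_le hk (min_le_left _ _)⟩
    · exact absurd h (Filter.not_eventually.mpr ((hex _ hε' (min_le_right _ _)).mono fun _ hk => not_le.mpr hk))
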